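/- Let d ∈ (0,1), A > 0, and let k be a positive even integer. The WENO-IM mapping function g(ω) = d + (ω − d)^{k+1} A / ((ω − d)^k A + ω(1 − ω)) is differentiable at ω = 0 with g′(0) = 1 + 1/(A d^{k−1}). -/

import Mathlib

/-- For d ∈ (0,1), A > 0 and a positive even integer k, the WENO-IM
mapping function is differentiable at ω = 0 with g′(0) = 1 + 1/(A d^{k−1}). -/
theorem wenoIM_deriv_at_zero (d : ℝ) (hd : d ∈ Set.Ioo (0:ℝ) 1)
    (A : ℝ) (hA : 0 < A) (k : ℕ) (hk : 0 < k) (hke : Even k)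
    (g : ℝ → ℝ)
    (hg : ∀ ω : ℝ, g ω = d + (ω - d)^(k+1) * A / ((ω - d)^k * A + ω*(1 - ω))) :
    HasDerivAt g (1 + 1/(A * d^(k-1))) 0 := by
  obtain ⟨hd0, hd1⟩ := hd
  obtain ⟨n, rfl⟩ : ∃ n, k = n + 1 := ⟨k - 1, (Nat.succ_pred_eq_of_pos hk).symm⟩
  have hon : Odd n := by
    rcases Nat.even_or_odd n with h | h
    · exact absurd hke (by simp [Nat.even_add_one, h])
    · exact h
  have funeq : g = fun ω => d + (ω - d)^(n+1+1) * A / ((ω - d)^(n+1) * A + ω*(1 - ω)) :=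
    funext hg
  have hN : HasDerivAt (fun ω : ℝ => (ω - d)^(n+2) * A)
      ((↑(n+2) * (0 - d)^(n+1) * 1) * A) 0 := by
    have := (((hasDerivAt_id (0:ℝ)).sub_const d).pow (n+2)).mul_const A
    simpa using this
  have hD : HasDerivAt (fun ω : ℝ => (ω - d)^(n+1) * A + ω*(1 - ω))
      ((↑(n+1) * (0 - d)^n * 1) * A + (1*(1-0) + 0*(0-1))) 0 := by
    have h1 := (((hasDerivAt_id (0:ℝ)).sub_const d).pow (n+1)).mul_const A
    have h2 := (hasDerivAt_id (0:ℝ)).mul ((hasDerivAt_const (0:ℝ) (1:ℝ)).sub (hasDerivAt_id 0))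
    simpa [Pi.add_def, Pi.mul_def, Pi.sub_def] using h1.add h2
  have hDne : ((0:ℝ) - d)^(n+1) * A + 0*(1 - 0) ≠ 0 := by
    have : ((0:ℝ) - d)^(n+1) = d^(n+1) := by
      rw [zero_sub, Even.neg_pow hke]
    rw [this]
    positivity
  have h := ((hN.div hD hDne).const_add d)
  rw [funeq]
  convert h using 1
  · rfl
  · rfl
  · rfl
  have e1 : ((0:ℝ) - d)^(n+1) = d^(n+1) := by rw [zero_sub, Even.neg_pow hke]
  have e2 : ((0:ℝ) - d)^(n+2) = -(d^(n+2)) := by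
    rw [zero_sub, Odd.neg_pow (by simpa [Nat.even_add_one, parity_simps] using hke.add_one)]
  have e3 : ((0:ℝ) - d)^n = -(d^n) := by rw [zero_sub, Odd.neg_pow hon]
  rw [e1, e2, e3]
  have hdn : d ≠ 0 := ne_of_gt hd0
  have hAn : A ≠ 0 := ne_of_gt hA
  simp only [Nat.add_sub_cancel]
  field_simp
  push_cast
  ring
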